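/- Let ψ : (𝔽_q, +) → ℂˣ be a nontrivial additive character, and for k ∈ 𝔽_qˣ define χ_k : N → ℂˣ by χ_k(1+aε, bε; cε, 1−aε) = ψ(kc). Then for k, m ∈ 𝔽_qˣ, there exists g ∈ SL₂(𝔽_q) with χ_m(n) = χ_k(i(g)⁻¹ n i(g)) for all n ∈ N if and only if there exists x ∈ 𝔽_qˣ with kx² = m. -/

import Mathlib

open Matrix TrivSqZeroExt

/-- The reduction homomorphism `SL₂(𝔽_q[X]/(X²)) → SL₂(𝔽_q)` induced by `ε ↦ 0`. -/
noncomputable def rho (F : Type) [Field F] :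
    Matrix.SpecialLinearGroup (Fin 2) (DualNumber F) →* Matrix.SpecialLinearGroup (Fin 2) F :=
  Matrix.SpecialLinearGroup.map (TrivSqZeroExt.fstHom F F F).toRingHom

/-- The homomorphism `SL₂(𝔽_q) → SL₂(𝔽_q[X]/(X²))` induced by the ring inclusion. -/
noncomputable def iota (F : Type) [Field F] :
    Matrix.SpecialLinearGroup (Fin 2) F →* Matrix.SpecialLinearGroup (Fin 2) (DualNumber F) :=
  Matrix.SpecialLinearGroup.map (TrivSqZeroExt.inlHom F F)

/-- The unipotent element `(1, 0; cε, 1)` of `SL₂(𝔽_q[X]/(X²))`. -/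
noncomputable def wcc (F : Type) [Field F] (c : F) :
    Matrix.SpecialLinearGroup (Fin 2) (DualNumber F) :=
  ⟨!![(1 : DualNumber F), 0; TrivSqZeroExt.inr c, 1], by simp [Matrix.det_fin_two_of]⟩

lemma sl_map_mk {R S : Type} [CommRing R] [CommRing S] (f : R →+* S) (A : Matrix (Fin 2) (Fin 2) R)
    (h : A.det = 1) :
    ((Matrix.SpecialLinearGroup.map f ⟨A, h⟩ : Matrix.SpecialLinearGroup (Fin 2) S) :
      Matrix (Fin 2) (Fin 2) S) = f.mapMatrix A := rfl

lemma wcc_mem_ker (F : Type) [Field F] (c : F) : wcc F c ∈ (rho F).ker := by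
  rw [MonoidHom.mem_ker]
  ext i j
  fin_cases i <;> fin_cases j <;>
    simp [rho, wcc, Matrix.SpecialLinearGroup.map_apply_coe, sl_map_mk]

lemma wcc_conj (F : Type) [Field F] (c : F) (g : Matrix.SpecialLinearGroup (Fin 2) F) :
    (((iota F g)⁻¹ * wcc F c * iota F g).val 1 0).snd = g.val 0 0 * g.val 0 0 * c := by
  rw [← map_inv, Matrix.SpecialLinearGroup.SL2_inv_expl g]
  simp only [Matrix.SpecialLinearGroup.coe_mul]
  erw [iota, Matrix.SpecialLinearGroup.map_apply_coe, RingHom.mapMatrix_apply]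
  simp [iota, wcc, Matrix.SpecialLinearGroup.map_apply_coe, Matrix.mul_apply,
    Fin.sum_univ_two, smul_eq_mul, RingHom.mapMatrix_apply, Matrix.map_apply, Matrix.map]
  ring

lemma addchar_coeff_zero {F : Type} [Field F] {ψ : AddChar F ℂˣ} (hψ : ψ ≠ 1) {t : F}
    (h : ∀ c : F, ψ (t * c) = 1) : t = 0 := by
  by_contra ht
  refine hψ (DFunLike.ext ψ 1 fun y => ?_)
  rw [AddChar.one_apply]
  have := h (t⁻¹ * y)
  rwa [mul_inv_cancel_left₀ ht] at this

theorem stmt4 (F : Type) [Field F] [Fintype F] (p n : ℕ) (hp : p.Prime) (hodd : p ≠ 2)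
    (hn : n ≠ 0) (hcard : Fintype.card F = p ^ n)
    (ψ : AddChar F ℂˣ) (hψ : ψ ≠ 1)
    (k m : F) (hk : k ≠ 0) (hm : m ≠ 0) :
    -- `χ_k` sends an element `w` of `N = ker ρ` to `ψ(k·c)`, where `c` is the
    -- `ε`-coefficient of the lower-left entry of `w`
    (∃ g : Matrix.SpecialLinearGroup (Fin 2) F, ∀ w ∈ (rho F).ker,
        ψ (m * (w.val 1 0).snd) =
          ψ (k * (((iota F g)⁻¹ * w * iota F g).val 1 0).snd)) ↔
      ∃ x : F, x ≠ 0 ∧ k * x ^ 2 = m := by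
  constructor
  · rintro ⟨g, hg⟩
    set α := g.val 0 0 with hα
    have h1 : ∀ c : F, ψ (m * c) = ψ (k * (α * α * c)) := by
      intro c
      have := hg (wcc F c) (wcc_mem_ker F c)
      rwa [wcc_conj F c g, show ((wcc F c).val 1 0).snd = c by simp [wcc]] at this
    have h2 : ∀ c : F, ψ ((m - k * (α * α)) * c) = 1 := by
      intro c
      have : ψ (m * c - k * (α * α * c)) = ψ (m * c) / ψ (k * (α * α * c)) :=
        AddChar.map_sub_eq_div ψ _ _
      rw [h1 c, div_self'] at this
      rw [← this]
      ring_nf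
    have h3 : m - k * (α * α) = 0 := addchar_coeff_zero hψ h2
    have h4 : k * α ^ 2 = m := by rw [sub_eq_zero] at h3; rw [h3]; ring
    refine ⟨α, ?_, h4⟩
    intro h0
    rw [h0] at h4
    simp at h4
    exact hm h4.symm
  · rintro ⟨x, hx, hkx⟩
    have hdet : Matrix.det !![x, 0; 0, x⁻¹] = 1 := by
      simp [Matrix.det_fin_two_of, mul_inv_cancel₀ hx]
    refine ⟨⟨!![x, 0; 0, x⁻¹], hdet⟩, fun w _ => ?_⟩
    have hc : (((iota F ⟨!![x, 0; 0, x⁻¹], hdet⟩)⁻¹ * w *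
        iota F ⟨!![x, 0; 0, x⁻¹], hdet⟩).val 1 0).snd = x * x * (w.val 1 0).snd := by
      erw [← map_inv, Matrix.SpecialLinearGroup.SL2_inv_expl]
      simp only [Matrix.SpecialLinearGroup.coe_mul]
      erw [iota, Matrix.SpecialLinearGroup.map_apply_coe, RingHom.mapMatrix_apply]
      simp [iota, Matrix.SpecialLinearGroup.map_apply_coe, Matrix.mul_apply,
        Fin.sum_univ_two, smul_eq_mul, RingHom.mapMatrix_apply, Matrix.map_apply, Matrix.map, sl_map_mk]
      ring
    rw [hc, show k * (x * x * (w.val 1 0).snd) = k * x ^ 2 * (w.val 1 0).snd by ring, hkx]
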